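/- Suppose 𝔤 preserves the nondegenerate reflexive bilinear form ⟨·,·⟩, the representation of 𝔤 on E is weakly irreducible, E = V₁ ⊕ V₂ where V₁ and V₂ are 𝔤-invariant subspaces, and both V₁ and V₂ are degenerate (V_i ∩ V_i^⊥ ≠ {0}). Let L = p_{V₁}^{V₂} − p_{V₂^⊥}^{V₁^⊥}. Then E = E_{(L,1)} ⊕ E_{(L,-1)}, V₁ ∩ V₁^⊥ ⊆ E_{(L,1)}, V₂ ∩ V₂^⊥ ⊆ E_{(L,-1)}, the subspaces E_{(L,1)} and E_{(L,-1)} are 𝔤-invariant and totally isotropic, and their sum is nondegenerate. -/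

import Mathlib

open Submodule

attribute [local instance 100] LieRing.ofAssociativeRing

/-- The projection onto `A` along a complement `B`, as an endomorphism of `E`. -/
noncomputable def projAlong {K E : Type*} [Field K] [AddCommGroup E] [Module K E]
    (A B : Submodule K E) (h : IsCompl A B) : E →ₗ[K] E :=
  A.subtype ∘ₗ A.linearProjOfIsCompl B h

/-- The generalized eigenspace `E_{(L,μ)} = ∪ₙ ker (L − μ·id)ⁿ`. -/
noncomputable def genEigen {K E : Type*} [Field K] [AddCommGroup E] [Module K E]
    (L : Module.End K E) (μ : K) : Submodule K E :=
  ⨆ n : ℕ, LinearMap.ker ((L - μ • (1 : Module.End K E)) ^ n)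

section Aux

variable {K E : Type*} [Field K] [AddCommGroup E] [Module K E]

lemma projAlong_mem (A B : Submodule K E) (h : IsCompl A B) (x : E) :
    projAlong A B h x ∈ A :=
  (A.linearProjOfIsCompl B h x).2

lemma projAlong_apply_left {A B : Submodule K E} (h : IsCompl A B) {x : E} (hx : x ∈ A) :
    projAlong A B h x = x :=
  congrArg Subtype.val (Submodule.linearProjOfIsCompl_apply_left h ⟨x, hx⟩)

lemma projAlong_apply_right {A B : Submodule K E} (h : IsCompl A B) {x : E} (hx : x ∈ B) :
    projAlong A B h x = 0 := by
  have h0 := Submodule.linearProjOfIsCompl_apply_right' h hx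
  show (↑(A.linearProjOfIsCompl B h x) : E) = 0
  exact congrArg Subtype.val h0

lemma sub_projAlong_mem {A B : Submodule K E} (h : IsCompl A B) (x : E) :
    x - projAlong A B h x ∈ B := by
  have hx : x ∈ A ⊔ B := by
    rw [codisjoint_iff.mp h.codisjoint]; exact Submodule.mem_top
  obtain ⟨y, hy, z, hz, rfl⟩ := Submodule.mem_sup.mp hx
  have : projAlong A B h (y + z) = y := by
    rw [map_add, projAlong_apply_left h hy, projAlong_apply_right h hz, add_zero]
  rw [this]
  simpa using hz

lemma comm_pow {a M : Module.End K E} (h : ∀ x, a (M x) = M (a x)) :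
    ∀ (k : ℕ) (x : E), a ((M ^ k) x) = (M ^ k) (a x) := by
  intro k
  induction k with
  | zero => intro x; simp
  | succ n ih =>
    intro x
    rw [pow_succ, Module.End.mul_apply, Module.End.mul_apply, ← h, ih]

lemma skew_pow (B : LinearMap.BilinForm K E) {S T : Module.End K E}
    (h : ∀ x y, B (S x) y = - B x (T y)) :
    ∀ (n : ℕ) (x y : E), B ((S ^ n) x) y = (-1 : K) ^ n * B x ((T ^ n) y) := by
  intro n
  induction n with
  | zero => intro x y; simp
  | succ n ih =>
    intro x y
    calc B ((S ^ (n + 1)) x) y = B ((S ^ n) (S x)) y := by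
          rw [pow_succ, Module.End.mul_apply]
      _ = (-1 : K) ^ n * B (S x) ((T ^ n) y) := ih _ _
      _ = (-1 : K) ^ n * (- B x (T ((T ^ n) y))) := by rw [h]
      _ = (-1 : K) ^ (n + 1) * B x ((T ^ (n + 1)) y) := by
          rw [pow_succ' T, Module.End.mul_apply]; ring

end Aux

/-- If the representation of `𝔤` preserving the nondegenerate reflexive form is weakly
irreducible and `E = V₁ ⊕ V₂` with both `Vᵢ` invariant and degenerate, then with
`L = p_{V₁}^{V₂} − p_{V₂^⊥}^{V₁^⊥}` we have `E = E_{(L,1)} ⊕ E_{(L,-1)}`,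
`V₁ ∩ V₁^⊥ ⊆ E_{(L,1)}`, `V₂ ∩ V₂^⊥ ⊆ E_{(L,-1)}`, both generalized eigenspaces are
invariant and totally isotropic, and their sum is nondegenerate. -/
theorem stmt16 {K E : Type*} [Field K] [AddCommGroup E] [Module K E]
    [FiniteDimensional K E] (hchar : (2 : K) ≠ 0)
    (B : LinearMap.BilinForm K E) (hBnd : B.Nondegenerate) (hBrefl : B.IsRefl)
    (𝔤 : LieSubalgebra K (Module.End K E))
    (hgB : ∀ a ∈ 𝔤, ∀ x y : E, B (a x) y + B x (a y) = 0)
    (hirr : ∀ S : Submodule K E, (∀ a ∈ 𝔤, ∀ x ∈ S, a x ∈ S) →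
      S = ⊥ ∨ S = ⊤ ∨ S ⊓ B.orthogonal S ≠ ⊥)
    (V₁ V₂ : Submodule K E) (hV : IsCompl V₁ V₂)
    (hinv₁ : ∀ a ∈ 𝔤, ∀ x ∈ V₁, a x ∈ V₁) (hinv₂ : ∀ a ∈ 𝔤, ∀ x ∈ V₂, a x ∈ V₂)
    (hdeg₁ : V₁ ⊓ B.orthogonal V₁ ≠ ⊥) (hdeg₂ : V₂ ⊓ B.orthogonal V₂ ≠ ⊥)
    (hW : IsCompl (B.orthogonal V₁) (B.orthogonal V₂))
    (L : Module.End K E)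
    (hL : L = projAlong V₁ V₂ hV -
      projAlong (B.orthogonal V₂) (B.orthogonal V₁) hW.symm) :
    (Disjoint (genEigen L 1) (genEigen L (-1)) ∧
      genEigen L 1 ⊔ genEigen L (-1) = ⊤) ∧
    V₁ ⊓ B.orthogonal V₁ ≤ genEigen L 1 ∧
    V₂ ⊓ B.orthogonal V₂ ≤ genEigen L (-1) ∧
    (∀ a ∈ 𝔤, ∀ x ∈ genEigen L 1, a x ∈ genEigen L 1) ∧
    (∀ a ∈ 𝔤, ∀ x ∈ genEigen L (-1), a x ∈ genEigen L (-1)) ∧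
    (∀ x ∈ genEigen L 1, ∀ y ∈ genEigen L 1, B x y = 0) ∧
    (∀ x ∈ genEigen L (-1), ∀ y ∈ genEigen L (-1), B x y = 0) ∧
    (genEigen L 1 ⊔ genEigen L (-1)) ⊓
        B.orthogonal (genEigen L 1 ⊔ genEigen L (-1)) = ⊥ := by
  classical
  set N := Module.finrank K E with hN
  set P := projAlong V₁ V₂ hV with hPdef
  set Q := projAlong (B.orthogonal V₂) (B.orthogonal V₁) hW.symm with hQdef
  -- basic projection facts
  have hP1 : ∀ x, P x ∈ V₁ := fun x => projAlong_mem _ _ _ x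
  have hP2 : ∀ x, x - P x ∈ V₂ := fun x => sub_projAlong_mem hV x
  have hQ1 : ∀ x, Q x ∈ B.orthogonal V₂ := fun x => projAlong_mem _ _ _ x
  have hQ2 : ∀ x, x - Q x ∈ B.orthogonal V₁ := fun x => sub_projAlong_mem hW.symm x
  have hPl : ∀ x ∈ V₁, P x = x := fun x hx => projAlong_apply_left hV hx
  have hPr : ∀ x ∈ V₂, P x = 0 := fun x hx => projAlong_apply_right hV hx
  have hQl : ∀ x ∈ B.orthogonal V₂, Q x = x := fun x hx => projAlong_apply_left hW.symm hx
  have hQr : ∀ x ∈ B.orthogonal V₁, Q x = 0 := fun x hx => projAlong_apply_right hW.symm hx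
  have horth : ∀ (W : Submodule K E) (x y : E), y ∈ B.orthogonal W → x ∈ W → B x y = 0 :=
    fun W x y hy hx => (LinearMap.BilinForm.mem_orthogonal_iff.mp hy) x hx
  have hLapp : ∀ z, L z = P z - Q z := by
    intro z; rw [hL]; exact LinearMap.sub_apply _ _ _
  -- skew-adjointness of L
  have hskew : ∀ x y, B (L x) y = - B x (L y) := by
    intro x y
    have e1 : B (P x) (y - Q y) = 0 := horth V₁ (P x) (y - Q y) (hQ2 y) (hP1 x)
    have e2 : B (x - P x) (Q y) = 0 := horth V₂ (x - P x) (Q y) (hQ1 y) (hP2 x)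
    have f1 : B (Q x) (y - P y) = 0 :=
      hBrefl _ _ (horth V₂ (y - P y) (Q x) (hQ1 x) (hP2 y))
    have f2 : B (x - Q x) (P y) = 0 :=
      hBrefl _ _ (horth V₁ (P y) (x - Q x) (hQ2 x) (hP1 y))
    have e1' : B (P x) y - B (P x) (Q y) = 0 := by
      rw [← map_sub]; exact e1
    have e2' : B x (Q y) - B (P x) (Q y) = 0 := by
      rw [← LinearMap.sub_apply, ← map_sub]; exact e2
    have f1' : B (Q x) y - B (Q x) (P y) = 0 := by
      rw [← map_sub]; exact f1
    have f2' : B x (P y) - B (Q x) (P y) = 0 := by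
      rw [← LinearMap.sub_apply, ← map_sub]; exact f2
    have c1 : B (P x) y = B x (Q y) := by linear_combination e1' - e2'
    have c2 : B (Q x) y = B x (P y) := by linear_combination f1' - f2'
    rw [hLapp x, hLapp y]
    have g1 : B (P x - Q x) y = B (P x) y - B (Q x) y := by
      rw [map_sub, LinearMap.sub_apply]
    have g2 : B x (P y - Q y) = B x (P y) - B x (Q y) := map_sub _ _ _
    rw [g1, g2]
    linear_combination c1 - c2
  -- invariance of orthogonal complements
  have hinvO : ∀ (W : Submodule K E), (∀ a ∈ 𝔤, ∀ x ∈ W, a x ∈ W) →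
      ∀ a ∈ 𝔤, ∀ y ∈ B.orthogonal W, a y ∈ B.orthogonal W := by
    intro W hWinv a ha y hy
    rw [LinearMap.BilinForm.mem_orthogonal_iff]
    intro n hn
    have h1 : B (a n) y = 0 :=
      (LinearMap.BilinForm.mem_orthogonal_iff.mp hy) (a n) (hWinv a ha n hn)
    have h2 := hgB a ha n y
    show B n (a y) = 0
    linear_combination h2 - h1
  -- L commutes with the 𝔤-action
  have hcomm : ∀ a ∈ 𝔤, ∀ x, a (L x) = L (a x) := by
    intro a ha x
    have hPa : P (a x) = a (P x) := by
      have h1 : a (P x) ∈ V₁ := hinv₁ a ha _ (hP1 x)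
      have h2 : a x - a (P x) ∈ V₂ := by
        rw [← map_sub]; exact hinv₂ a ha _ (hP2 x)
      calc P (a x) = P (a (P x) + (a x - a (P x))) := by congr 1; abel
        _ = P (a (P x)) + P (a x - a (P x)) := map_add _ _ _
        _ = a (P x) + 0 := by rw [hPl _ h1, hPr _ h2]
        _ = a (P x) := add_zero _
    have hQa : Q (a x) = a (Q x) := by
      have h1 : a (Q x) ∈ B.orthogonal V₂ := hinvO V₂ hinv₂ a ha _ (hQ1 x)
      have h2 : a x - a (Q x) ∈ B.orthogonal V₁ := by
        rw [← map_sub]; exact hinvO V₁ hinv₁ a ha _ (hQ2 x)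
      calc Q (a x) = Q (a (Q x) + (a x - a (Q x))) := by congr 1; abel
        _ = Q (a (Q x)) + Q (a x - a (Q x)) := map_add _ _ _
        _ = a (Q x) + 0 := by rw [hQl _ h1, hQr _ h2]
        _ = a (Q x) := add_zero _
    rw [hLapp x, hLapp (a x), map_sub, hPa, hQa]
  -- polynomial bookkeeping
  have hu2 : IsUnit ((1 : K) - (-1)) := by
    have : (1 : K) - (-1) = 2 := by ring
    rw [this]; exact isUnit_iff_ne_zero.mpr hchar
  have hcp : IsCoprime (Polynomial.X - Polynomial.C (1 : K))
      (Polynomial.X - Polynomial.C (-1)) :=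
    Polynomial.isCoprime_X_sub_C_of_isUnit_sub hu2
  set p : Polynomial K := Polynomial.X - Polynomial.C 1 with hp
  set q : Polynomial K := Polynomial.X - Polynomial.C (-1) with hq
  have hφp : Polynomial.aeval L p = L - 1 := by
    rw [hp, map_sub, Polynomial.aeval_X, Polynomial.aeval_C, map_one]
  have hφq : Polynomial.aeval L q = L + 1 := by
    rw [hq, map_sub, Polynomial.aeval_X, Polynomial.aeval_C, map_neg, map_one, sub_neg_eq_add]
  have hmulφ : ∀ (r s : Polynomial K) (x : E),
      (Polynomial.aeval L r) ((Polynomial.aeval L s) x) = (Polynomial.aeval L (r * s)) x := by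
    intro r s x; rw [map_mul]; rfl
  have hswapφ : ∀ (r s : Polynomial K) (x : E),
      (Polynomial.aeval L r) ((Polynomial.aeval L s) x)
        = (Polynomial.aeval L s) ((Polynomial.aeval L r) x) := by
    intro r s x; rw [hmulφ, hmulφ, mul_comm]
  have key : ∀ m : ℕ, ∃ u v : Polynomial K, ∀ x : E,
      (Polynomial.aeval L (u * p ^ m)) x + (Polynomial.aeval L (v * q ^ m)) x = x := by
    intro m
    obtain ⟨u, v, huv⟩ := (hcp.pow (m := m) (n := m))
    refine ⟨u, v, fun x => ?_⟩
    have h1 : Polynomial.aeval L (u * p ^ m + v * q ^ m) = 1 := by rw [huv, map_one]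
    calc (Polynomial.aeval L (u * p ^ m)) x + (Polynomial.aeval L (v * q ^ m)) x
        = (Polynomial.aeval L (u * p ^ m + v * q ^ m)) x := by rw [map_add]; rfl
      _ = x := by rw [h1]; rfl
  -- identification of the generalized eigenspaces
  have hsm1 : L - (1 : K) • (1 : Module.End K E) = L - 1 := by rw [one_smul]
  have hsm2 : L - (-1 : K) • (1 : Module.End K E) = L + 1 := by
    rw [neg_smul, one_smul, sub_neg_eq_add]
  have hgen1 : genEigen L 1 = LinearMap.ker ((L - 1) ^ N) := by
    unfold genEigen
    rw [hsm1]
    refine le_antisymm (iSup_le fun n => ?_) (le_iSup (fun n => LinearMap.ker ((L - 1) ^ n)) N)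
    exact Module.End.ker_pow_le_ker_pow_finrank (L - 1) n
  have hgen2 : genEigen L (-1) = LinearMap.ker ((L + 1) ^ N) := by
    unfold genEigen
    rw [hsm2]
    refine le_antisymm (iSup_le fun n => ?_) (le_iSup (fun n => LinearMap.ker ((L + 1) ^ n)) N)
    exact Module.End.ker_pow_le_ker_pow_finrank (L + 1) n
  obtain ⟨u, v, huv⟩ := key N
  -- disjointness
  have hdisj : Disjoint (genEigen L 1) (genEigen L (-1)) := by
    rw [Submodule.disjoint_def]
    intro x hx1 hx2
    rw [hgen1, LinearMap.mem_ker] at hx1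
    rw [hgen2, LinearMap.mem_ker] at hx2
    have e1 : (Polynomial.aeval L (u * p ^ N)) x = 0 := by
      rw [← hmulφ, map_pow, hφp, hx1, map_zero]
    have e2 : (Polynomial.aeval L (v * q ^ N)) x = 0 := by
      rw [← hmulφ, map_pow, hφq, hx2, map_zero]
    have h := huv x
    rw [e1, e2, add_zero] at h
    exact h.symm
  -- eigenvector memberships
  have hmem1 : V₁ ⊓ B.orthogonal V₁ ≤ genEigen L 1 := by
    intro x hx
    obtain ⟨hx1, hx2⟩ := Submodule.mem_inf.mp hx
    have hLx : L x = x := by rw [hLapp, hPl x hx1, hQr x hx2, sub_zero]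
    have hker : x ∈ LinearMap.ker ((L - (1 : K) • (1 : Module.End K E)) ^ 1) := by
      rw [LinearMap.mem_ker, pow_one, hsm1, LinearMap.sub_apply, hLx, Module.End.one_apply,
        sub_self]
    exact le_iSup (fun n => LinearMap.ker ((L - (1 : K) • (1 : Module.End K E)) ^ n)) 1 hker
  have hmem2 : V₂ ⊓ B.orthogonal V₂ ≤ genEigen L (-1) := by
    intro x hx
    obtain ⟨hx1, hx2⟩ := Submodule.mem_inf.mp hx
    have hLx : L x = -x := by rw [hLapp, hPr x hx1, hQl x hx2, zero_sub]
    have hker : x ∈ LinearMap.ker ((L - (-1 : K) • (1 : Module.End K E)) ^ 1) := by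
      rw [LinearMap.mem_ker, pow_one, hsm2, LinearMap.add_apply, hLx, Module.End.one_apply,
        neg_add_cancel]
    exact le_iSup (fun n => LinearMap.ker ((L - (-1 : K) • (1 : Module.End K E)) ^ n)) 1 hker
  -- commutation with L ∓ 1
  have hcM : ∀ a ∈ 𝔤, ∀ z, a ((L - 1) z) = (L - 1) (a z) := by
    intro a ha z
    rw [LinearMap.sub_apply, LinearMap.sub_apply, Module.End.one_apply, Module.End.one_apply,
      map_sub, hcomm a ha z]
  have hcP : ∀ a ∈ 𝔤, ∀ z, a ((L + 1) z) = (L + 1) (a z) := by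
    intro a ha z
    rw [LinearMap.add_apply, LinearMap.add_apply, Module.End.one_apply, Module.End.one_apply,
      map_add, hcomm a ha z]
  -- invariance of the generalized eigenspaces
  have hainv1 : ∀ a ∈ 𝔤, ∀ x ∈ genEigen L 1, a x ∈ genEigen L 1 := by
    intro a ha x hx
    rw [hgen1, LinearMap.mem_ker] at hx ⊢
    rw [← comm_pow (hcM a ha) N x, hx, map_zero]
  have hainv2 : ∀ a ∈ 𝔤, ∀ x ∈ genEigen L (-1), a x ∈ genEigen L (-1) := by
    intro a ha x hx
    rw [hgen2, LinearMap.mem_ker] at hx ⊢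
    rw [← comm_pow (hcP a ha) N x, hx, map_zero]
  -- iterated skew-adjointness
  have hskew1 : ∀ x y, B ((L - 1) x) y = - B x ((L + 1) y) := by
    intro x y
    have h1 : B ((L - 1) x) y = B (L x) y - B x y := by
      rw [LinearMap.sub_apply, Module.End.one_apply, map_sub, LinearMap.sub_apply]
    have h2 : B x ((L + 1) y) = B x (L y) + B x y := by
      rw [LinearMap.add_apply, Module.End.one_apply, map_add]
    rw [h1, h2]
    linear_combination hskew x y
  have hskew2 : ∀ x y, B ((L + 1) x) y = - B x ((L - 1) y) := by
    intro x y
    have h1 : B ((L + 1) x) y = B (L x) y + B x y := by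
      rw [LinearMap.add_apply, Module.End.one_apply, map_add, LinearMap.add_apply]
    have h2 : B x ((L - 1) y) = B x (L y) - B x y := by
      rw [LinearMap.sub_apply, Module.End.one_apply, map_sub]
    rw [h1, h2]
    linear_combination hskew x y
  have hskewP1 := skew_pow B hskew1
  have hskewP2 := skew_pow B hskew2
  have hneg1N : ((-1 : K) ^ N) ≠ 0 := pow_ne_zero _ (neg_ne_zero.mpr one_ne_zero)
  -- total isotropy
  have hiso1 : ∀ x ∈ genEigen L 1, ∀ y ∈ genEigen L 1, B x y = 0 := by
    intro x hx y hy
    rw [hgen1, LinearMap.mem_ker] at hx hy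
    have hyz : y = ((L + 1) ^ N) ((Polynomial.aeval L v) y) := by
      have h0 := huv y
      have e1 : (Polynomial.aeval L (u * p ^ N)) y = 0 := by
        rw [← hmulφ, map_pow, hφp, hy, map_zero]
      have e2 : (Polynomial.aeval L (v * q ^ N)) y
          = ((L + 1) ^ N) ((Polynomial.aeval L v) y) := by
        rw [← hmulφ, hswapφ, map_pow, hφq]
      rw [e1, e2, zero_add] at h0
      exact h0.symm
    rw [hyz]
    have h := hskewP1 N x ((Polynomial.aeval L v) y)
    rw [hx] at h
    simp only [map_zero, LinearMap.zero_apply] at h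
    rcases mul_eq_zero.mp h.symm with h' | h'
    · exact absurd h' hneg1N
    · exact h'
  have hiso2 : ∀ x ∈ genEigen L (-1), ∀ y ∈ genEigen L (-1), B x y = 0 := by
    intro x hx y hy
    rw [hgen2, LinearMap.mem_ker] at hx hy
    have hyz : y = ((L - 1) ^ N) ((Polynomial.aeval L u) y) := by
      have h0 := huv y
      have e2 : (Polynomial.aeval L (v * q ^ N)) y = 0 := by
        rw [← hmulφ, map_pow, hφq, hy, map_zero]
      have e1 : (Polynomial.aeval L (u * p ^ N)) y
          = ((L - 1) ^ N) ((Polynomial.aeval L u) y) := by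
        rw [← hmulφ, hswapφ, map_pow, hφp]
      rw [e1, e2, add_zero] at h0
      exact h0.symm
    rw [hyz]
    have h := hskewP2 N x ((Polynomial.aeval L u) y)
    rw [hx] at h
    simp only [map_zero, LinearMap.zero_apply] at h
    rcases mul_eq_zero.mp h.symm with h' | h'
    · exact absurd h' hneg1N
    · exact h'
  -- the auxiliary operator T and its range
  set T : Module.End K E := Polynomial.aeval L (p ^ N * q ^ N) with hT
  set R : Submodule K E := LinearMap.range T with hR
  have hTy1 : ∀ y, T y = ((L + 1) ^ N) (((L - 1) ^ N) y) := by
    intro y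
    rw [hT, show p ^ N * q ^ N = q ^ N * p ^ N from mul_comm _ _, ← hmulφ]
    simp only [map_pow, hφp, hφq]
  have hTy2 : ∀ y, T y = ((L - 1) ^ N) (((L + 1) ^ N) y) := by
    intro y
    rw [hT, ← hmulφ]
    simp only [map_pow, hφp, hφq]
  have hET : LinearMap.ker ((L - 1) ^ N) ≤ LinearMap.ker T := by
    intro x hx
    rw [LinearMap.mem_ker] at hx ⊢
    rw [hTy1, hx, map_zero]
  have hET2 : LinearMap.ker ((L + 1) ^ N) ≤ LinearMap.ker T := by
    intro x hx
    rw [LinearMap.mem_ker] at hx ⊢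
    rw [hTy2, hx, map_zero]
  have hkerT_le : LinearMap.ker T ≤ LinearMap.ker ((L - 1) ^ N) ⊔ LinearMap.ker ((L + 1) ^ N) := by
    intro x hx
    rw [LinearMap.mem_ker] at hx
    refine Submodule.mem_sup.mpr
      ⟨(Polynomial.aeval L (v * q ^ N)) x, ?_, (Polynomial.aeval L (u * p ^ N)) x, ?_, ?_⟩
    · rw [LinearMap.mem_ker]
      have hpoly : p ^ N * (v * q ^ N) = v * (p ^ N * q ^ N) := by ring
      rw [← hφp, ← map_pow, hmulφ, hpoly, ← hmulφ, ← hT, hx, map_zero]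
    · rw [LinearMap.mem_ker]
      have hpoly : q ^ N * (u * p ^ N) = u * (p ^ N * q ^ N) := by ring
      rw [← hφq, ← map_pow, hmulφ, hpoly, ← hmulφ, ← hT, hx, map_zero]
    · rw [add_comm]; exact huv x
  -- stabilization of kernels
  have hstab1 : LinearMap.ker ((L - 1) ^ (2 * N)) = LinearMap.ker ((L - 1) ^ N) := by
    have h1 := Module.End.ker_pow_eq_ker_pow_finrank_of_le (f := L - 1) (m := 2 * N)
      (by rw [← hN]; omega)
    rw [← hN] at h1
    exact h1
  have hstab2 : LinearMap.ker ((L + 1) ^ (2 * N)) = LinearMap.ker ((L + 1) ^ N) := by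
    have h1 := Module.End.ker_pow_eq_ker_pow_finrank_of_le (f := L + 1) (m := 2 * N)
      (by rw [← hN]; omega)
    rw [← hN] at h1
    exact h1
  have hkerTT : LinearMap.ker (T * T) ≤ LinearMap.ker T := by
    intro x hx
    rw [LinearMap.mem_ker] at hx ⊢
    have hTT : T * T = Polynomial.aeval L (p ^ (2 * N) * q ^ (2 * N)) := by
      rw [hT, ← map_mul]; congr 1; ring
    obtain ⟨u₂, v₂, huv₂⟩ := key (2 * N)
    have ea : ((L - 1) ^ N) ((Polynomial.aeval L (v₂ * q ^ (2 * N))) x) = 0 := by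
      have h2 : ((L - 1) ^ (2 * N)) ((Polynomial.aeval L (v₂ * q ^ (2 * N))) x) = 0 := by
        have hpoly : p ^ (2 * N) * (v₂ * q ^ (2 * N)) = v₂ * (p ^ (2 * N) * q ^ (2 * N)) := by
          ring
        rw [← hφp, ← map_pow, hmulφ, hpoly, ← hmulφ, ← hTT]
        rw [Module.End.mul_apply] at hx ⊢
        rw [hx, map_zero]
      have hm := LinearMap.mem_ker.mpr h2
      rw [hstab1] at hm
      exact LinearMap.mem_ker.mp hm
    have eb : ((L + 1) ^ N) ((Polynomial.aeval L (u₂ * p ^ (2 * N))) x) = 0 := by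
      have h2 : ((L + 1) ^ (2 * N)) ((Polynomial.aeval L (u₂ * p ^ (2 * N))) x) = 0 := by
        have hpoly : q ^ (2 * N) * (u₂ * p ^ (2 * N)) = u₂ * (p ^ (2 * N) * q ^ (2 * N)) := by
          ring
        rw [← hφq, ← map_pow, hmulφ, hpoly, ← hmulφ, ← hTT]
        rw [Module.End.mul_apply] at hx ⊢
        rw [hx, map_zero]
      have hm := LinearMap.mem_ker.mpr h2
      rw [hstab2] at hm
      exact LinearMap.mem_ker.mp hm
    have hTa : T ((Polynomial.aeval L (v₂ * q ^ (2 * N))) x) = 0 :=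
      LinearMap.mem_ker.mp (hET (LinearMap.mem_ker.mpr ea))
    have hTb : T ((Polynomial.aeval L (u₂ * p ^ (2 * N))) x) = 0 :=
      LinearMap.mem_ker.mp (hET2 (LinearMap.mem_ker.mpr eb))
    calc T x = T ((Polynomial.aeval L (u₂ * p ^ (2 * N))) x
          + (Polynomial.aeval L (v₂ * q ^ (2 * N))) x) := by rw [huv₂]
      _ = 0 := by rw [map_add, hTa, hTb, add_zero]
  -- kernel and range are complementary
  have hdkr : Disjoint (LinearMap.ker T) R := by
    rw [Submodule.disjoint_def]
    intro x hk hr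
    obtain ⟨y, rfl⟩ := LinearMap.mem_range.mp hr
    have hy : y ∈ LinearMap.ker (T * T) := by
      rw [LinearMap.mem_ker, Module.End.mul_apply]
      exact LinearMap.mem_ker.mp hk
    exact LinearMap.mem_ker.mp (hkerTT hy)
  have hsupKR : LinearMap.ker T ⊔ R = ⊤ := by
    apply Submodule.eq_top_of_finrank_eq
    have h1 := Submodule.finrank_sup_add_finrank_inf_eq (LinearMap.ker T) R
    have h2 : LinearMap.ker T ⊓ R = ⊥ := disjoint_iff.mp hdkr
    have h3 := LinearMap.finrank_range_add_finrank_ker T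
    rw [← hR] at h3
    rw [h2, finrank_bot, add_zero] at h1
    rw [← hN] at h3
    omega
  -- ker T is orthogonal to R
  have hBkR : ∀ x ∈ LinearMap.ker T, ∀ r ∈ R, B x r = 0 := by
    intro x hx r hr
    obtain ⟨y, rfl⟩ := LinearMap.mem_range.mp hr
    obtain ⟨x₁, hx₁, x₂, hx₂, rfl⟩ := Submodule.mem_sup.mp (hkerT_le hx)
    rw [LinearMap.mem_ker] at hx₁ hx₂
    have b1 : B x₁ (T y) = 0 := by
      rw [hTy1 y]
      have h := hskewP1 N x₁ (((L - 1) ^ N) y)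
      rw [hx₁] at h
      simp only [map_zero, LinearMap.zero_apply] at h
      rcases mul_eq_zero.mp h.symm with h' | h'
      · exact absurd h' hneg1N
      · exact h'
    have b2 : B x₂ (T y) = 0 := by
      rw [hTy2 y]
      have h := hskewP2 N x₂ (((L + 1) ^ N) y)
      rw [hx₂] at h
      simp only [map_zero, LinearMap.zero_apply] at h
      rcases mul_eq_zero.mp h.symm with h' | h'
      · exact absurd h' hneg1N
      · exact h'
    rw [map_add, LinearMap.add_apply, b1, b2, add_zero]
  -- R is nondegenerate
  have hRnd : R ⊓ B.orthogonal R = ⊥ := by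
    rw [eq_bot_iff]
    intro r hr
    obtain ⟨hrR, hrO⟩ := Submodule.mem_inf.mp hr
    have hall : ∀ m : E, B m r = 0 := by
      intro m
      have hm : m ∈ LinearMap.ker T ⊔ R := by rw [hsupKR]; exact Submodule.mem_top
      obtain ⟨k, hk, s, hs, rfl⟩ := Submodule.mem_sup.mp hm
      have h1 : B k r = 0 := hBkR k hk r hrR
      have h2 : B s r = 0 := (LinearMap.BilinForm.mem_orthogonal_iff.mp hrO) s hs
      rw [map_add, LinearMap.add_apply, h1, h2, add_zero]
    have hr0 : r = 0 := hBnd.1 r fun n => hBrefl n r (hall n)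
    rw [hr0]
    exact Submodule.zero_mem ⊥
  -- R is invariant
  have hRinv : ∀ a ∈ 𝔤, ∀ x ∈ R, a x ∈ R := by
    intro a ha x hx
    obtain ⟨y, rfl⟩ := LinearMap.mem_range.mp hx
    refine LinearMap.mem_range.mpr ⟨a y, ?_⟩
    rw [hTy1 (a y), hTy1 y, ← comm_pow (hcM a ha) N y, ← comm_pow (hcP a ha) N _]
  -- conclusion: the sum of the generalized eigenspaces is everything
  have hsup : genEigen L 1 ⊔ genEigen L (-1) = ⊤ := by
    rcases hirr R hRinv with hRbot | hRtop | hRdeg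
    · rw [hgen1, hgen2, eq_top_iff]
      intro x _
      apply hkerT_le
      rw [LinearMap.mem_ker]
      have hmem : T x ∈ R := LinearMap.mem_range.mpr ⟨x, rfl⟩
      rw [hRbot] at hmem
      simpa using hmem
    · exfalso
      have hsurj : Function.Surjective T := LinearMap.range_eq_top.mp (hR ▸ hRtop)
      have hinj : Function.Injective T := LinearMap.injective_iff_surjective.mpr hsurj
      have hker : LinearMap.ker T = ⊥ := LinearMap.ker_eq_bot.mpr hinj
      have hle : V₁ ⊓ B.orthogonal V₁ ≤ (⊥ : Submodule K E) := by
        refine le_trans hmem1 ?_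
        rw [hgen1]
        exact le_trans hET (le_of_eq hker)
      exact hdeg₁ (le_bot_iff.mp hle)
    · exact absurd hRnd hRdeg
  have horthTop : B.orthogonal (⊤ : Submodule K E) = ⊥ := by
    rw [eq_bot_iff]
    intro x hx
    have hall : ∀ n, B x n = 0 := fun n =>
      hBrefl n x ((LinearMap.BilinForm.mem_orthogonal_iff.mp hx) n Submodule.mem_top)
    have hx0 : x = 0 := hBnd.1 x hall
    rw [hx0]
    exact Submodule.zero_mem ⊥
  refine ⟨⟨hdisj, hsup⟩, hmem1, hmem2, hainv1, hainv2, hiso1, hiso2, ?_⟩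
  rw [hsup, horthTop, inf_bot_eq]
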